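/- Let ℓ : ℝ^d → ℝ be L-smooth, e ∈ ℝ^d, and suppose candidates v, v' satisfy ‖v − e‖ ≤ R and ‖v' − e‖ ≤ R. If the linear scores satisfy ⟨v − e, ∇ℓ(e)⟩ ≤ ⟨v' − e, ∇ℓ(e)⟩, then ℓ(v) ≤ ℓ(v') + L·R². -/

import Mathlib

/-- `p` is a probability distribution on the finite type `Ω`. -/
def IsProbDist {Ω : Type*} [Fintype Ω] (p : Ω → ℝ) : Prop :=
  (∀ b, 0 ≤ p b) ∧ ∑ b, p b = 1

/-- Total variation distance between two distributions on a finite type. -/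
noncomputable def tv {Ω : Type*} [Fintype Ω] (p q : Ω → ℝ) : ℝ :=
  (1 / 2) * ∑ b, |p b - q b|

/-- Mass that `p` assigns to the finite set `B`. -/
def probOf {Ω : Type*} (p : Ω → ℝ) (B : Finset Ω) : ℝ := ∑ b ∈ B, p b

/-- Uniform distribution on a finite nonempty subset `R`, embedded in `Ω`. -/
noncomputable def uniformOn {Ω : Type*} [DecidableEq Ω] (R : Finset Ω) : Ω → ℝ :=
  fun b => if b ∈ R then 1 / (R.card : ℝ) else 0

/-- Kullback–Leibler divergence `D(q ‖ p)` on a finite type, valued in `EReal`,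
with the conventions `0 · log 0 = 0` and `q · log (q / 0) = +∞` for `q > 0`. -/
noncomputable def klE {Ω : Type*} [Fintype Ω] (q p : Ω → ℝ) : EReal :=
  ∑ b, if q b = 0 then (0 : EReal) else if p b = 0 then (⊤ : EReal)
    else ((q b * Real.log (q b / p b) : ℝ) : EReal)

open intervalIntegral

lemma descent {d : ℕ} (L : ℝ) (hL : 0 ≤ L)
    (ℓ : EuclideanSpace ℝ (Fin d) → ℝ) (hdiff : Differentiable ℝ ℓ)
    (hlip : ∀ a b, ‖gradient ℓ a - gradient ℓ b‖ ≤ L * ‖a - b‖)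
    (a b : EuclideanSpace ℝ (Fin d)) :
    |ℓ b - ℓ a - inner ℝ (b - a) (gradient ℓ a)| ≤ L / 2 * ‖b - a‖ ^ 2 := by
  set c : ℝ → EuclideanSpace ℝ (Fin d) := fun t => a + t • (b - a) with hc
  have hcder : ∀ t : ℝ, HasDerivAt c (b - a) t := fun t => by
    simpa [c] using ((hasDerivAt_id t).smul_const (b - a)).const_add a
  have hgradlip : LipschitzWith L.toNNReal (gradient ℓ) := by
    apply LipschitzWith.of_dist_le_mul
    intro x y
    rw [dist_eq_norm, dist_eq_norm]
    simpa [Real.coe_toNNReal L hL] using hlip x y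
  have hccont : Continuous c := by
    continuity
  set φ : ℝ → ℝ := fun t => inner ℝ (gradient ℓ (c t)) (b - a) with hφ
  have hφcont : Continuous φ :=
    ((hgradlip.continuous.comp hccont).inner continuous_const)
  have hg : ∀ t : ℝ, HasDerivAt (fun t => ℓ (c t)) (φ t) t := by
    intro t
    have h1 : HasFDerivAt ℓ (InnerProductSpace.toDual ℝ _ (gradient ℓ (c t))) (c t) :=
      (hdiff (c t)).hasGradientAt.hasFDerivAt
    refine (h1.comp_hasDerivAt t (hcder t)).congr_deriv ?_
    simp [φ]
  have hint : ℓ b - ℓ a = ∫ t in (0:ℝ)..1, φ t := by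
    have := integral_eq_sub_of_hasDerivAt (f := fun t => ℓ (c t))
      (fun t _ => hg t) (hφcont.intervalIntegrable 0 1)
    simp only [c] at this
    simpa using this.symm
  have hφ0 : φ 0 = inner ℝ (b - a) (gradient ℓ a) := by
    simp [φ, c, real_inner_comm]
  have key : ℓ b - ℓ a - inner ℝ (b - a) (gradient ℓ a)
      = ∫ t in (0:ℝ)..1, (φ t - φ 0) := by
    rw [intervalIntegral.integral_sub (hφcont.intervalIntegrable 0 1)
      (intervalIntegrable_const), hint, hφ0]
    simp
  rw [key]
  have hbound : ∀ t ∈ Set.Ioc (0:ℝ) 1, |φ t - φ 0| ≤ (L * ‖b - a‖ ^ 2) * t := by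
    intro t ht
    have h1 : φ t - φ 0 = inner ℝ (gradient ℓ (c t) - gradient ℓ (c 0)) (b - a) := by
      simp [φ, inner_sub_left]
    rw [h1]
    calc |inner ℝ (gradient ℓ (c t) - gradient ℓ (c 0)) (b - a)|
        ≤ ‖gradient ℓ (c t) - gradient ℓ (c 0)‖ * ‖b - a‖ := abs_real_inner_le_norm _ _
      _ ≤ (L * ‖c t - c 0‖) * ‖b - a‖ := by
          gcongr; exact hlip _ _
      _ = (L * ‖b - a‖ ^ 2) * t := by
          have : c t - c 0 = t • (b - a) := by simp [c]
          rw [this, norm_smul, Real.norm_eq_abs, abs_of_pos ht.1]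
          ring
  have h2 : |∫ t in (0:ℝ)..1, (φ t - φ 0)|
      ≤ |∫ t in (0:ℝ)..1, (L * ‖b - a‖ ^ 2) * t| := by
    rw [← Real.norm_eq_abs (∫ t in (0:ℝ)..1, (φ t - φ 0))]
    apply norm_integral_le_abs_of_norm_le
    · filter_upwards [MeasureTheory.ae_restrict_mem measurableSet_Ioc] with t ht
      rw [Set.uIoc_of_le zero_le_one] at *
      exact hbound t ht
    · exact (continuous_const.mul continuous_id).intervalIntegrable 0 1
  calc |∫ t in (0:ℝ)..1, (φ t - φ 0)| ≤ _ := h2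
    _ = L / 2 * ‖b - a‖ ^ 2 := by
        rw [intervalIntegral.integral_const_mul, integral_id]
        rw [abs_of_nonneg (by positivity)]
        ring

/-- single-pair screening inequality — a candidate with a better
first-order score exceeds the other candidate's loss by at most `L·R²`. -/
theorem stmt14 {d : ℕ} (L R : ℝ) (hL : 0 ≤ L)
    (ℓ : EuclideanSpace ℝ (Fin d) → ℝ) (hdiff : Differentiable ℝ ℓ)
    (hlip : ∀ a b, ‖gradient ℓ a - gradient ℓ b‖ ≤ L * ‖a - b‖)
    (e v v' : EuclideanSpace ℝ (Fin d))
    (hv : ‖v - e‖ ≤ R) (hv' : ‖v' - e‖ ≤ R)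
    (hscore : (inner ℝ (v - e) (gradient ℓ e) : ℝ) ≤ (inner ℝ (v' - e) (gradient ℓ e) : ℝ)) :
    ℓ v ≤ ℓ v' + L * R ^ 2 := by
  have h1 := abs_le.1 (descent L hL ℓ hdiff hlip e v)
  have h2 := abs_le.1 (descent L hL ℓ hdiff hlip e v')
  have hv2 : ‖v - e‖ ^ 2 ≤ R ^ 2 := by
    have := norm_nonneg (v - e); nlinarith
  have hv'2 : ‖v' - e‖ ^ 2 ≤ R ^ 2 := by
    have := norm_nonneg (v' - e); nlinarith
  nlinarith [h1.1, h1.2, h2.1, h2.2, mul_le_mul_of_nonneg_left hv2 (by linarith : 0 ≤ L / 2),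
    mul_le_mul_of_nonneg_left hv'2 (by linarith : 0 ≤ L / 2)]
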